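/- Let Σ and Σ̂ be symmetric p×p matrices with eigendecompositions with top-d eigenvector matrices U, Û ∈ ℝ^{p×d} (orthonormal columns) and eigenvalues λᵢ + σ² (for Σ, on the column space of U) and λ̂ⱼ + σ̂² (for Σ̂), all positive. Let D = diag((λᵢ+σ²)^{-1/2}), D̂ = diag((λ̂ⱼ+σ̂²)^{-1/2}). Then the entrywise identity UᵀÛD̂ − DUᵀÛ = (Uᵀ(Σ − Σ̂)Û) ∘ H holds, where H is the d×d matrix with Hᵢⱼ = (λ̂ⱼ+σ̂²)^{-1/2}(λᵢ+σ²)^{-1/2}((λ̂ⱼ+σ̂²)^{1/2} + (λᵢ+σ²)^{1/2})^{-1}, and consequently ‖UᵀÛD̂ − DUᵀÛ‖₂ ≤ ‖Uᵀ(Σ − Σ̂)Û‖₂ · ‖H‖₂. -/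

import Mathlib

open Matrix

noncomputable def l2 {n : ℕ} (v : Fin n → ℝ) : ℝ := Real.sqrt (∑ j, v j ^ 2)

/-- The spectral norm: sup of ‖Mx‖₂ over the ℓ₂ unit sphere. -/
noncomputable def spec {p₁ p₂ : ℕ} (M : Matrix (Fin p₁) (Fin p₂) ℝ) : ℝ :=
  ⨆ x : {x : Fin p₂ → ℝ // l2 x = 1}, l2 (M.mulVec x.1)

section Aux

lemma l2_nonneg {n : ℕ} (v : Fin n → ℝ) : 0 ≤ l2 v := Real.sqrt_nonneg _

lemma l2_sq {n : ℕ} (v : Fin n → ℝ) : l2 v ^ 2 = ∑ j, v j ^ 2 :=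
  Real.sq_sqrt (Finset.sum_nonneg fun _ _ => sq_nonneg _)

lemma le_on_sq {x y : ℝ} (hx : 0 ≤ x) (hy : 0 ≤ y) (h : x ^ 2 ≤ y ^ 2) : x ≤ y := by
  nlinarith

lemma l2_smul {n : ℕ} (c : ℝ) (v : Fin n → ℝ) : l2 (c • v) = |c| * l2 v := by
  unfold l2
  rw [← Real.sqrt_sq_eq_abs, ← Real.sqrt_mul (sq_nonneg c), Finset.mul_sum]
  congr 1
  apply Finset.sum_congr rfl
  intro j _
  simp [mul_pow]

noncomputable def frob {m n : ℕ} (M : Matrix (Fin m) (Fin n) ℝ) : ℝ :=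
  Real.sqrt (∑ i, ∑ j, M i j ^ 2)

lemma frob_nonneg {m n : ℕ} (M : Matrix (Fin m) (Fin n) ℝ) : 0 ≤ frob M :=
  Real.sqrt_nonneg _

lemma frob_sq {m n : ℕ} (M : Matrix (Fin m) (Fin n) ℝ) :
    frob M ^ 2 = ∑ i, ∑ j, M i j ^ 2 :=
  Real.sq_sqrt (Finset.sum_nonneg fun _ _ => Finset.sum_nonneg fun _ _ => sq_nonneg _)

lemma l2_mulVec_le_frob {m n : ℕ} (M : Matrix (Fin m) (Fin n) ℝ) (x : Fin n → ℝ) :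
    l2 (M.mulVec x) ≤ frob M * l2 x := by
  refine le_on_sq (l2_nonneg _) (mul_nonneg (frob_nonneg M) (l2_nonneg x)) ?_
  rw [l2_sq, mul_pow, frob_sq, l2_sq, Finset.sum_mul]
  apply Finset.sum_le_sum
  intro i _
  have : M.mulVec x i = ∑ j, M i j * x j := by
    simp [Matrix.mulVec, dotProduct]
  rw [this]
  exact Finset.sum_mul_sq_le_sq_mul_sq _ _ _

lemma spec_bdd {m n : ℕ} (M : Matrix (Fin m) (Fin n) ℝ) :
    BddAbove (Set.range fun x : {x : Fin n → ℝ // l2 x = 1} => l2 (M.mulVec x.1)) := by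
  refine ⟨frob M, ?_⟩
  rintro _ ⟨x, rfl⟩
  simpa [x.2] using l2_mulVec_le_frob M x.1

lemma l2_mulVec_le_spec {m n : ℕ} (M : Matrix (Fin m) (Fin n) ℝ) (x : Fin n → ℝ) :
    l2 (M.mulVec x) ≤ spec M * l2 x := by
  rcases eq_or_ne (l2 x) 0 with h | h
  · have hx : x = 0 := by
      funext j
      have h1 : ∑ k, x k ^ 2 = 0 := by
        have := l2_sq x; rw [h] at this; simpa using this.symm
      have h2 : x j ^ 2 ≤ 0 := by
        rw [← h1]
        exact Finset.single_le_sum (f := fun k => x k ^ 2)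
          (fun k _ => sq_nonneg _) (Finset.mem_univ j)
      have h3 : x j ^ 2 = 0 := le_antisymm h2 (sq_nonneg _)
      exact (pow_eq_zero_iff two_ne_zero).mp h3
    rw [hx, Matrix.mulVec_zero]
    simp [l2]
  · have hpos : 0 < l2 x := (l2_nonneg x).lt_of_ne (Ne.symm h)
    set u : Fin n → ℝ := (l2 x)⁻¹ • x with hu
    have hu1 : l2 u = 1 := by
      rw [hu, l2_smul, abs_of_pos (by positivity), inv_mul_cancel₀ h]
    have hle : l2 (M.mulVec u) ≤ spec M := le_ciSup (spec_bdd M) ⟨u, hu1⟩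
    have hmv : M.mulVec u = (l2 x)⁻¹ • M.mulVec x := by
      rw [hu, Matrix.mulVec_smul]
    rw [hmv, l2_smul, abs_of_pos (by positivity)] at hle
    have := mul_le_mul_of_nonneg_left hle (le_of_lt hpos)
    calc l2 (M.mulVec x) = l2 x * ((l2 x)⁻¹ * l2 (M.mulVec x)) := by
          field_simp
      _ ≤ l2 x * spec M := this
      _ = spec M * l2 x := mul_comm _ _

lemma spec_nonneg {m n : ℕ} (M : Matrix (Fin m) (Fin n) ℝ) : 0 ≤ spec M := by
  rcases isEmpty_or_nonempty {x : Fin n → ℝ // l2 x = 1} with h | h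
  · rw [spec, Real.iSup_of_isEmpty]
  · obtain ⟨x⟩ := h
    exact (l2_nonneg _).trans (le_ciSup (spec_bdd M) x)

lemma spec_le {m n : ℕ} (M : Matrix (Fin m) (Fin n) ℝ) {c : ℝ} (hc : 0 ≤ c)
    (h : ∀ x : Fin n → ℝ, l2 x = 1 → l2 (M.mulVec x) ≤ c) : spec M ≤ c :=
  Real.iSup_le (fun x => h x.1 x.2) hc

lemma frob_inner {m n : ℕ} (P Q : Matrix (Fin m) (Fin n) ℝ) :
    ∑ i, ∑ j, P i j * Q i j ≤ frob P * frob Q := by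
  have h := Real.sum_mul_le_sqrt_mul_sqrt (Finset.univ : Finset (Fin m × Fin n))
    (fun p => P p.1 p.2) (fun p => Q p.1 p.2)
  simpa [frob, Fintype.sum_prod_type] using h

lemma frob_diagonal {n : ℕ} (v : Fin n → ℝ) : frob (Matrix.diagonal v) = l2 v := by
  unfold frob l2
  congr 1
  apply Finset.sum_congr rfl
  intro i _
  simp [Matrix.diagonal_apply, apply_ite (· ^ 2)]

lemma frob_mul_le {m n k : ℕ} (A : Matrix (Fin m) (Fin n) ℝ)
    (B : Matrix (Fin n) (Fin k) ℝ) : frob (A * B) ≤ spec A * frob B := by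
  refine le_on_sq (frob_nonneg _) (mul_nonneg (spec_nonneg A) (frob_nonneg B)) ?_
  rw [frob_sq, mul_pow, frob_sq]
  have step : ∀ j : Fin k, ∑ i, (A * B) i j ^ 2 ≤ spec A ^ 2 * ∑ t, B t j ^ 2 := by
    intro j
    have hcol : ∀ i, (A * B) i j = A.mulVec (fun t => B t j) i := by
      intro i; simp [Matrix.mul_apply, Matrix.mulVec, dotProduct]
    have h1 : l2 (A.mulVec fun t => B t j) ≤ spec A * l2 (fun t => B t j) :=
      l2_mulVec_le_spec _ _
    have h2 := pow_le_pow_left₀ (l2_nonneg _) h1 2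
    rw [mul_pow, l2_sq, l2_sq] at h2
    calc ∑ i, (A * B) i j ^ 2 = ∑ i, (A.mulVec fun t => B t j) i ^ 2 := by
          apply Finset.sum_congr rfl; intro i _; rw [hcol i]
      _ ≤ spec A ^ 2 * ∑ t, B t j ^ 2 := h2
  calc ∑ i, ∑ j, (A * B) i j ^ 2 = ∑ j, ∑ i, (A * B) i j ^ 2 := Finset.sum_comm
    _ ≤ ∑ j, spec A ^ 2 * ∑ t, B t j ^ 2 := Finset.sum_le_sum fun j _ => step j
    _ = spec A ^ 2 * ∑ t, ∑ j, B t j ^ 2 := by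
        rw [← Finset.mul_sum]
        congr 1
        exact Finset.sum_comm

lemma frob_transpose {m n : ℕ} (M : Matrix (Fin m) (Fin n) ℝ) : frob Mᵀ = frob M := by
  unfold frob
  rw [Finset.sum_comm]
  rfl

lemma frob_mul_diag_le {m n : ℕ} (H : Matrix (Fin m) (Fin n) ℝ) (x : Fin n → ℝ) :
    frob (H * Matrix.diagonal x) ≤ spec H * l2 x := by
  refine le_on_sq (frob_nonneg _) (mul_nonneg (spec_nonneg H) (l2_nonneg x)) ?_
  rw [frob_sq, mul_pow, l2_sq, Finset.sum_comm, Finset.mul_sum]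
  apply Finset.sum_le_sum
  intro j _
  have hcol : ∀ i, (H * Matrix.diagonal x) i j = H i j * x j := fun i =>
    Matrix.mul_diagonal _ _ _ _
  have hsingle : l2 (Pi.single j (1 : ℝ)) = 1 := by
    have hsum : (∑ k, (Pi.single j (1 : ℝ) : Fin n → ℝ) k ^ 2) = 1 := by
      simp [Pi.single_apply, apply_ite (· ^ 2)]
    unfold l2
    rw [hsum, Real.sqrt_one]
  have hmv : H.mulVec (Pi.single j (1 : ℝ)) = fun i => H i j := by
    funext i
    simp [Matrix.mulVec, dotProduct, Pi.single_apply]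
  have h1 : l2 (fun i => H i j) ≤ spec H := by
    have := l2_mulVec_le_spec H (Pi.single j (1 : ℝ))
    rwa [hmv, hsingle, mul_one] at this
  have h2 := pow_le_pow_left₀ (l2_nonneg _) h1 2
  rw [l2_sq] at h2
  calc ∑ i, (H * Matrix.diagonal x) i j ^ 2 = (∑ i, H i j ^ 2) * x j ^ 2 := by
        rw [Finset.sum_mul]
        apply Finset.sum_congr rfl
        intro i _
        rw [hcol i, mul_pow]
    _ ≤ spec H ^ 2 * x j ^ 2 := mul_le_mul_of_nonneg_right h2 (sq_nonneg _)

lemma spec_hadamard_le {m n : ℕ} (A H : Matrix (Fin m) (Fin n) ℝ) :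
    spec (Matrix.hadamard A H) ≤ spec A * spec H := by
  refine spec_le _ (mul_nonneg (spec_nonneg A) (spec_nonneg H)) ?_
  intro x hx
  set v := (Matrix.hadamard A H).mulVec x with hv
  set Q := A * (H * Matrix.diagonal x)ᵀ with hQdef
  have hQ : ∀ i, Q i i = v i := by
    intro i
    rw [hQdef, Matrix.mul_apply, hv]
    show _ = ∑ k, Matrix.hadamard A H i k * x k
    apply Finset.sum_congr rfl
    intro k _
    rw [Matrix.transpose_apply, Matrix.mul_diagonal, Matrix.hadamard_apply]
    ring
  have e1 : l2 v ^ 2 = ∑ i, ∑ j, (Matrix.diagonal v) i j * Q i j := by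
    rw [l2_sq]
    apply Finset.sum_congr rfl
    intro i _
    rw [show (∑ j, (Matrix.diagonal v) i j * Q i j) = v i * Q i i by
      simp [Matrix.diagonal_apply, ite_mul]]
    rw [hQ i]; ring
  have hfq : frob Q ≤ spec A * spec H := by
    calc frob Q ≤ spec A * frob (H * Matrix.diagonal x)ᵀ := frob_mul_le _ _
      _ = spec A * frob (H * Matrix.diagonal x) := by rw [frob_transpose]
      _ ≤ spec A * (spec H * l2 x) :=
          mul_le_mul_of_nonneg_left (frob_mul_diag_le H x) (spec_nonneg A)
      _ = spec A * spec H := by rw [hx, mul_one]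
  have key : l2 v ^ 2 ≤ l2 v * (spec A * spec H) := by
    calc l2 v ^ 2 = ∑ i, ∑ j, (Matrix.diagonal v) i j * Q i j := e1
      _ ≤ frob (Matrix.diagonal v) * frob Q := frob_inner _ _
      _ = l2 v * frob Q := by rw [frob_diagonal]
      _ ≤ l2 v * (spec A * spec H) :=
          mul_le_mul_of_nonneg_left hfq (l2_nonneg v)
  rcases eq_or_lt_of_le (l2_nonneg v) with h0 | h0
  · rw [← h0]
    exact mul_nonneg (spec_nonneg A) (spec_nonneg H)
  · nlinarith

end Aux

/-- Entrywise identity `UᵀÛD̂ − DUᵀÛ = (Uᵀ(Σ − Σ̂)Û) ∘ H` and the resulting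
spectral norm bound `‖UᵀÛD̂ − DUᵀÛ‖₂ ≤ ‖Uᵀ(Σ − Σ̂)Û‖₂ ‖H‖₂`, where
`a i = λᵢ + σ²`, `b j = λ̂ⱼ + σ̂²` are the top-`d` eigenvalues of `Σ`, `Σ̂`, and
`D = diag(aᵢ^{-1/2})`, `D̂ = diag(bⱼ^{-1/2})`,
`Hᵢⱼ = bⱼ^{-1/2} aᵢ^{-1/2} (bⱼ^{1/2} + aᵢ^{1/2})⁻¹`. -/
theorem stmt13 {p d : ℕ} (S Shat : Matrix (Fin p) (Fin p) ℝ)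
    (U Uhat : Matrix (Fin p) (Fin d) ℝ) (a b : Fin d → ℝ)
    (hS : Sᵀ = S) (hShat : Shatᵀ = Shat)
    (hU : Uᵀ * U = 1) (hUhat : Uhatᵀ * Uhat = 1)
    (ha : ∀ i, 0 < a i) (hb : ∀ j, 0 < b j)
    (hSU : S * U = U * Matrix.diagonal a)
    (hShatU : Shat * Uhat = Uhat * Matrix.diagonal b) :
    Uᵀ * Uhat * Matrix.diagonal (fun j => (Real.sqrt (b j))⁻¹)
        - Matrix.diagonal (fun i => (Real.sqrt (a i))⁻¹) * (Uᵀ * Uhat)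
      = Matrix.hadamard (Uᵀ * (S - Shat) * Uhat)
          (Matrix.of fun i j =>
            (Real.sqrt (b j))⁻¹ * (Real.sqrt (a i))⁻¹ *
              (Real.sqrt (b j) + Real.sqrt (a i))⁻¹) ∧
    spec (Uᵀ * Uhat * Matrix.diagonal (fun j => (Real.sqrt (b j))⁻¹)
        - Matrix.diagonal (fun i => (Real.sqrt (a i))⁻¹) * (Uᵀ * Uhat))
      ≤ spec (Uᵀ * (S - Shat) * Uhat) *
          spec (Matrix.of fun i j =>
            (Real.sqrt (b j))⁻¹ * (Real.sqrt (a i))⁻¹ *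
              (Real.sqrt (b j) + Real.sqrt (a i))⁻¹) := by
  have hM : Uᵀ * (S - Shat) * Uhat
      = Matrix.diagonal a * (Uᵀ * Uhat) - (Uᵀ * Uhat) * Matrix.diagonal b := by
    have h1 : Uᵀ * S = Matrix.diagonal a * Uᵀ := by
      calc Uᵀ * S = (Sᵀ * U)ᵀ := by
            rw [Matrix.transpose_mul, Matrix.transpose_transpose]
        _ = (S * U)ᵀ := by rw [hS]
        _ = (U * Matrix.diagonal a)ᵀ := by rw [hSU]
        _ = Matrix.diagonal a * Uᵀ := by
            rw [Matrix.transpose_mul, Matrix.diagonal_transpose]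
    calc Uᵀ * (S - Shat) * Uhat = Uᵀ * S * Uhat - Uᵀ * (Shat * Uhat) := by
          rw [Matrix.mul_sub, Matrix.sub_mul, Matrix.mul_assoc Uᵀ Shat Uhat]
      _ = Matrix.diagonal a * Uᵀ * Uhat - Uᵀ * Uhat * Matrix.diagonal b := by
          rw [h1, hShatU, ← Matrix.mul_assoc Uᵀ Uhat (Matrix.diagonal b)]
      _ = Matrix.diagonal a * (Uᵀ * Uhat) - (Uᵀ * Uhat) * Matrix.diagonal b := by
          rw [Matrix.mul_assoc (Matrix.diagonal a) Uᵀ Uhat]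
  have heq : Uᵀ * Uhat * Matrix.diagonal (fun j => (Real.sqrt (b j))⁻¹)
        - Matrix.diagonal (fun i => (Real.sqrt (a i))⁻¹) * (Uᵀ * Uhat)
      = Matrix.hadamard (Uᵀ * (S - Shat) * Uhat)
          (Matrix.of fun i j =>
            (Real.sqrt (b j))⁻¹ * (Real.sqrt (a i))⁻¹ *
              (Real.sqrt (b j) + Real.sqrt (a i))⁻¹) := by
    rw [hM]
    ext i j
    rw [Matrix.sub_apply, Matrix.mul_diagonal, Matrix.diagonal_mul,
      Matrix.hadamard_apply, Matrix.sub_apply, Matrix.mul_diagonal,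
      Matrix.diagonal_mul, Matrix.of_apply]
    set M := (Uᵀ * Uhat) i j
    have hsa : 0 < Real.sqrt (a i) := Real.sqrt_pos.mpr (ha i)
    have hsb : 0 < Real.sqrt (b j) := Real.sqrt_pos.mpr (hb j)
    have haa : a i = Real.sqrt (a i) ^ 2 := (Real.sq_sqrt (ha i).le).symm
    have hbb : b j = Real.sqrt (b j) ^ 2 := (Real.sq_sqrt (hb j).le).symm
    rw [haa, hbb]
    set sa := Real.sqrt (a i)
    set sb := Real.sqrt (b j)
    have hsab : sb + sa ≠ 0 := by positivity
    field_simp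
    rw [Real.sqrt_sq hsa.le, Real.sqrt_sq hsb.le]
    ring
  exact ⟨heq, by rw [heq]; exact spec_hadamard_le _ _⟩
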